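/- Let l1, l2, l3 be integers, each at least 2. Then the symmetric sum over all six permutations σ of {1,2,3} satisfies Σ_{σ ∈ S3} ζ(l_{σ(1)}, l_{σ(2)}, l_{σ(3)}) = ζ(l1)ζ(l2)ζ(l3) − [ζ(l1+l2)ζ(l3) + ζ(l1+l3)ζ(l2) + ζ(l2+l3)ζ(l1)] + 2·ζ(l1+l2+l3). (Case n=3 of Corollary 1 of the paper, restricted to convergent indices; this is Hoffman's symmetric-sum theorem in depth 3.) -/

import Mathlib

open Classical in
/-- The multiple zeta value `ζ(l 0, l 1, …, l (n-1)) =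
∑_{m 0 > m 1 > ⋯ > m (n-1) ≥ 1} ∏ i, 1 / (m i) ^ (l i)`. -/
noncomputable def mzv {n : ℕ} (l : Fin n → ℕ) : ℝ :=
  ∑' m : Fin n → ℕ,
    if StrictAnti m ∧ ∀ i, 1 ≤ m i then ∏ i, (1 : ℝ) / (m i : ℝ) ^ (l i) else 0

namespace HoffAux

noncomputable def zf (k : ℕ) : ℕ → ℝ := fun m => 1 / (m : ℝ) ^ k

lemma zf_nonneg (k m : ℕ) : 0 ≤ zf k m := by unfold zf; positivity

lemma zf_zero {k : ℕ} (hk : 1 ≤ k) : zf k 0 = 0 := by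
  simp [zf, zero_pow (by omega : k ≠ 0)]

lemma zf_summable {k : ℕ} (hk : 2 ≤ k) : Summable (zf k) :=
  Real.summable_one_div_nat_pow.2 (by omega)

lemma zf_mul (j k m : ℕ) : zf j m * zf k m = zf (j + k) m := by
  simp [zf, pow_add, div_mul_div_comm, mul_comm]

lemma mzv_single {k : ℕ} (hk : 1 ≤ k) : mzv ![k] = ∑' m : ℕ, zf k m := by
  rw [mzv, ← Equiv.tsum_eq (Equiv.funUnique (Fin 1) ℕ).symm]
  refine tsum_congr fun n => ?_
  have hsa : StrictAnti ((Equiv.funUnique (Fin 1) ℕ).symm n) :=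
    fun a b h => absurd (Subsingleton.elim a b) h.ne
  by_cases hn : 1 ≤ n
  · rw [if_pos ⟨hsa, fun _ => hn⟩]
    simp [zf]
  · rw [if_neg (by simp [hn])]
    have : n = 0 := by omega
    rw [this, zf_zero hk]

end HoffAux

namespace HoffAux

noncomputable def G (a b c : ℕ) : (Fin 3 → ℕ) → ℝ :=
  fun m => zf a (m 0) * zf b (m 1) * zf c (m 2)

lemma G_nonneg (a b c : ℕ) (m : Fin 3 → ℕ) : 0 ≤ G a b c m :=
  mul_nonneg (mul_nonneg (zf_nonneg _ _) (zf_nonneg _ _)) (zf_nonneg _ _)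

lemma G_zero (a b c : ℕ) (ha : 1 ≤ a) (hb : 1 ≤ b) (hc : 1 ≤ c)
    {m : Fin 3 → ℕ} (hm : ¬ ∀ i, 1 ≤ m i) : G a b c m = 0 := by
  push_neg at hm
  obtain ⟨i, hi⟩ := hm
  have hi0 : m i = 0 := by omega
  fin_cases i <;> simp_all [G, zf_zero, ha, hb, hc]

def e3 : ℕ × ℕ × ℕ ≃ (Fin 3 → ℕ) where
  toFun p := ![p.1, p.2.1, p.2.2]
  invFun m := (m 0, m 1, m 2)
  left_inv p := rfl
  right_inv m := by funext i; fin_cases i <;> rfl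

lemma G_e3 (a b c : ℕ) (p : ℕ × ℕ × ℕ) :
    G a b c (e3 p) = zf a p.1 * (zf b p.2.1 * zf c p.2.2) := by
  show zf a p.1 * zf b p.2.1 * zf c p.2.2 = _
  rw [mul_assoc]

lemma summable_inner {b c : ℕ} (hb : 2 ≤ b) (hc : 2 ≤ c) :
    Summable fun x : ℕ × ℕ => zf b x.1 * zf c x.2 :=
  (zf_summable hb).mul_of_nonneg (zf_summable hc) (fun m => zf_nonneg _ _)
    (fun m => zf_nonneg _ _)

lemma summable_G {a b c : ℕ} (ha : 2 ≤ a) (hb : 2 ≤ b) (hc : 2 ≤ c) :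
    Summable (G a b c) := by
  rw [← e3.summable_iff]
  have : Summable fun p : ℕ × (ℕ × ℕ) => zf a p.1 * (zf b p.2.1 * zf c p.2.2) :=
    (zf_summable ha).mul_of_nonneg (summable_inner hb hc) (fun m => zf_nonneg _ _)
      (fun p => mul_nonneg (zf_nonneg _ _) (zf_nonneg _ _))
  exact this.congr fun p => (G_e3 a b c p).symm

lemma norm_summable {k : ℕ} (hk : 2 ≤ k) : Summable fun m => ‖zf k m‖ :=
  summable_norm_iff.2 (zf_summable hk)

lemma tsum_pair {b c : ℕ} (hb : 2 ≤ b) (hc : 2 ≤ c) :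
    (∑' m, zf b m) * (∑' m, zf c m) = ∑' x : ℕ × ℕ, zf b x.1 * zf c x.2 :=
  tsum_mul_tsum_of_summable_norm (norm_summable hb) (norm_summable hc)

lemma tsum_G {a b c : ℕ} (ha : 2 ≤ a) (hb : 2 ≤ b) (hc : 2 ≤ c) :
    ∑' m, G a b c m = (∑' m, zf a m) * (∑' m, zf b m) * (∑' m, zf c m) := by
  rw [← e3.tsum_eq (G a b c)]
  rw [mul_assoc, tsum_pair hb hc,
    tsum_mul_tsum_of_summable_norm (norm_summable ha)
      (summable_norm_iff.2 (summable_inner hb hc))]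
  exact tsum_congr fun p => G_e3 a b c p

end HoffAux

namespace HoffAux

lemma range01 {m : Fin 3 → ℕ} (h : m 0 = m 1) :
    m = (fun p : ℕ × ℕ => (![p.1, p.1, p.2] : Fin 3 → ℕ)) (m 0, m 2) := by
  funext i; fin_cases i <;> simp [h]

lemma tsum_diag01 {a b c : ℕ} (ha : 2 ≤ a) (hb : 2 ≤ b) (hc : 2 ≤ c) :
    ∑' m : Fin 3 → ℕ, (if m 0 = m 1 then G a b c m else 0)
      = (∑' m, zf (a + b) m) * (∑' m, zf c m) := by
  classical
  set j : ℕ × ℕ → (Fin 3 → ℕ) := fun p => ![p.1, p.1, p.2] with hjdef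
  have hj : Function.Injective j := by
    intro p q h
    have h0 := congrFun h 0; have h2 := congrFun h 2
    simp [j] at h0 h2
    exact Prod.ext h0 h2
  have hsupp : Function.support (fun m : Fin 3 → ℕ =>
      (if m 0 = m 1 then G a b c m else 0)) ⊆ Set.range j := by
    intro m hm
    by_cases h : m 0 = m 1
    · exact ⟨(m 0, m 2), (range01 h).symm⟩
    · simp [h] at hm
  rw [← hj.tsum_eq hsupp, tsum_pair (by omega) hc]
  refine tsum_congr fun p => ?_
  simp [j, G, ← zf_mul a b]

lemma range02 {m : Fin 3 → ℕ} (h : m 0 = m 2) :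
    m = (fun p : ℕ × ℕ => (![p.1, p.2, p.1] : Fin 3 → ℕ)) (m 0, m 1) := by
  funext i; fin_cases i <;> simp [h]

lemma tsum_diag02 {a b c : ℕ} (ha : 2 ≤ a) (hb : 2 ≤ b) (hc : 2 ≤ c) :
    ∑' m : Fin 3 → ℕ, (if m 0 = m 2 then G a b c m else 0)
      = (∑' m, zf (a + c) m) * (∑' m, zf b m) := by
  classical
  set j : ℕ × ℕ → (Fin 3 → ℕ) := fun p => ![p.1, p.2, p.1] with hjdef
  have hj : Function.Injective j := by
    intro p q h
    have h0 := congrFun h 0; have h1 := congrFun h 1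
    simp [j] at h0 h1
    exact Prod.ext h0 h1
  have hsupp : Function.support (fun m : Fin 3 → ℕ =>
      (if m 0 = m 2 then G a b c m else 0)) ⊆ Set.range j := by
    intro m hm
    by_cases h : m 0 = m 2
    · exact ⟨(m 0, m 1), (range02 h).symm⟩
    · simp [h] at hm
  rw [← hj.tsum_eq hsupp, tsum_pair (by omega) hb]
  refine tsum_congr fun p => ?_
  simp only [j, G]
  simp only [Matrix.cons_val_zero, Matrix.cons_val_one, Matrix.head_cons,
    Matrix.cons_val_two, Matrix.tail_cons, if_true]
  rw [← zf_mul a c]; ring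

lemma range12 {m : Fin 3 → ℕ} (h : m 1 = m 2) :
    m = (fun p : ℕ × ℕ => (![p.1, p.2, p.2] : Fin 3 → ℕ)) (m 0, m 1) := by
  funext i; fin_cases i <;> simp [h]

lemma tsum_diag12 {a b c : ℕ} (ha : 2 ≤ a) (hb : 2 ≤ b) (hc : 2 ≤ c) :
    ∑' m : Fin 3 → ℕ, (if m 1 = m 2 then G a b c m else 0)
      = (∑' m, zf a m) * (∑' m, zf (b + c) m) := by
  classical
  set j : ℕ × ℕ → (Fin 3 → ℕ) := fun p => ![p.1, p.2, p.2] with hjdef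
  have hj : Function.Injective j := by
    intro p q h
    have h0 := congrFun h 0; have h1 := congrFun h 1
    simp [j] at h0 h1
    exact Prod.ext h0 h1
  have hsupp : Function.support (fun m : Fin 3 → ℕ =>
      (if m 1 = m 2 then G a b c m else 0)) ⊆ Set.range j := by
    intro m hm
    by_cases h : m 1 = m 2
    · exact ⟨(m 0, m 1), (range12 h).symm⟩
    · simp [h] at hm
  rw [← hj.tsum_eq hsupp, tsum_pair ha (by omega)]
  refine tsum_congr fun p => ?_
  simp only [j, G]
  simp only [Matrix.cons_val_zero, Matrix.cons_val_one, Matrix.head_cons,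
    Matrix.cons_val_two, Matrix.tail_cons, if_true]
  rw [← zf_mul b c]; ring

lemma rangeAll {m : Fin 3 → ℕ} (h01 : m 0 = m 1) (h12 : m 1 = m 2) :
    m = (fun p : ℕ => (![p, p, p] : Fin 3 → ℕ)) (m 0) := by
  funext i; fin_cases i <;> simp <;> omega

lemma tsum_diagAll (a b c : ℕ) :
    ∑' m : Fin 3 → ℕ, (if m 0 = m 1 ∧ m 1 = m 2 then G a b c m else 0)
      = ∑' m, zf (a + b + c) m := by
  classical
  set j : ℕ → (Fin 3 → ℕ) := fun p => ![p, p, p] with hjdef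
  have hj : Function.Injective j := by
    intro p q h
    have h0 := congrFun h 0
    simpa [j] using h0
  have hsupp : Function.support (fun m : Fin 3 → ℕ =>
      (if m 0 = m 1 ∧ m 1 = m 2 then G a b c m else 0)) ⊆ Set.range j := by
    intro m hm
    by_cases h : m 0 = m 1 ∧ m 1 = m 2
    · exact ⟨m 0, (rangeAll h.1 h.2).symm⟩
    · simp [h] at hm
  rw [← hj.tsum_eq hsupp]
  refine tsum_congr fun p => ?_
  simp [j, G, ← zf_mul, mul_assoc]

end HoffAux

namespace HoffAux

lemma strictAnti_fin3 (f : Fin 3 → ℕ) : StrictAnti f ↔ f 1 < f 0 ∧ f 2 < f 1 := by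
  constructor
  · intro h; exact ⟨h (by decide), h (by decide)⟩
  · rintro ⟨h1, h2⟩ a b hab
    fin_cases a <;> fin_cases b <;> simp_all <;> omega

lemma mzv_perm (a b c : ℕ) (σ : Equiv.Perm (Fin 3)) :
    mzv (![a, b, c] ∘ σ) = ∑' m : Fin 3 → ℕ,
      if StrictAnti (m ∘ σ) ∧ (∀ i, 1 ≤ m i) then G a b c m else 0 := by
  classical
  rw [mzv, ← Equiv.tsum_eq (Equiv.arrowCongr σ (Equiv.refl ℕ)).symm]
  refine (tsum_congr fun m => ?_).symm
  have hcomp : ((Equiv.arrowCongr σ (Equiv.refl ℕ)).symm m) = m ∘ σ := by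
    funext i; simp [Equiv.arrowCongr]
  rw [hcomp]
  have hpos : (∀ i, 1 ≤ (m ∘ σ) i) ↔ (∀ i, 1 ≤ m i) := by
    constructor
    · intro h i; simpa using h (σ.symm i)
    · intro h i; exact h _
  have hprod : (∏ i, (1 : ℝ) / ((m ∘ σ) i : ℝ) ^ ((![a, b, c] ∘ σ) i))
      = G a b c m := by
    rw [show (∏ i, (1 : ℝ) / ((m ∘ σ) i : ℝ) ^ ((![a, b, c] ∘ σ) i))
        = ∏ i, (1 : ℝ) / ((m i : ℝ)) ^ (![a, b, c] i) from
      Equiv.prod_comp σ (fun i => (1 : ℝ) / ((m i : ℝ)) ^ (![a, b, c] i))]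
    rw [Fin.prod_univ_three]
    simp [G, zf]
  by_cases h : StrictAnti (m ∘ σ) ∧ (∀ i, 1 ≤ m i)
  · rw [if_pos h, if_pos ⟨h.1, hpos.2 h.2⟩, hprod]
  · rw [if_neg h, if_neg (fun hh => h ⟨hh.1, hpos.1 hh.2⟩)]

end HoffAux

namespace HoffAux

lemma perm_univ : (Finset.univ : Finset (Equiv.Perm (Fin 3))) =
    {1, Equiv.swap 0 1, Equiv.swap 0 2, Equiv.swap 1 2,
     Equiv.swap 0 1 * Equiv.swap 1 2, Equiv.swap 1 2 * Equiv.swap 0 1} := by decide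

set_option maxHeartbeats 3000000 in
lemma key (a b c : ℕ) (ha : 1 ≤ a) (hb : 1 ≤ b) (hc : 1 ≤ c) (m : Fin 3 → ℕ) :
    ∑ σ : Equiv.Perm (Fin 3),
        (if StrictAnti (m ∘ σ) ∧ (∀ i, 1 ≤ m i) then G a b c m else 0)
      = G a b c m
        - ((if m 0 = m 1 then G a b c m else 0) + (if m 0 = m 2 then G a b c m else 0)
            + (if m 1 = m 2 then G a b c m else 0))
        + 2 * (if m 0 = m 1 ∧ m 1 = m 2 then G a b c m else 0) := by
  classical
  by_cases hm : ∀ i, 1 ≤ m i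
  case neg =>
    rw [G_zero a b c ha hb hc hm]
    simp [hm]
  case pos =>
    have hrw : ∀ σ : Equiv.Perm (Fin 3),
        (if StrictAnti (m ∘ σ) ∧ (∀ i, 1 ≤ m i) then G a b c m else 0)
          = if m (σ 1) < m (σ 0) ∧ m (σ 2) < m (σ 1) then G a b c m else 0 := by
      intro σ
      simp only [strictAnti_fin3 (m ∘ σ), Function.comp_apply, hm, implies_true, and_true]
    simp only [hrw]
    rw [perm_univ]
    rw [Finset.sum_insert (by decide), Finset.sum_insert (by decide),
      Finset.sum_insert (by decide), Finset.sum_insert (by decide),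
      Finset.sum_insert (by decide), Finset.sum_singleton]
    have e1 : ((1 : Equiv.Perm (Fin 3)) 0 = 0) ∧ ((1 : Equiv.Perm (Fin 3)) 1 = 1)
        ∧ ((1 : Equiv.Perm (Fin 3)) 2 = 2) := by decide
    have e2 : ((Equiv.swap 0 1 : Equiv.Perm (Fin 3)) 0 = 1)
        ∧ ((Equiv.swap 0 1 : Equiv.Perm (Fin 3)) 1 = 0)
        ∧ ((Equiv.swap 0 1 : Equiv.Perm (Fin 3)) 2 = 2) := by decide
    have e3 : ((Equiv.swap 0 2 : Equiv.Perm (Fin 3)) 0 = 2)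
        ∧ ((Equiv.swap 0 2 : Equiv.Perm (Fin 3)) 1 = 1)
        ∧ ((Equiv.swap 0 2 : Equiv.Perm (Fin 3)) 2 = 0) := by decide
    have e4 : ((Equiv.swap 1 2 : Equiv.Perm (Fin 3)) 0 = 0)
        ∧ ((Equiv.swap 1 2 : Equiv.Perm (Fin 3)) 1 = 2)
        ∧ ((Equiv.swap 1 2 : Equiv.Perm (Fin 3)) 2 = 1) := by decide
    have e5 : ((Equiv.swap 0 1 * Equiv.swap 1 2 : Equiv.Perm (Fin 3)) 0 = 1)
        ∧ ((Equiv.swap 0 1 * Equiv.swap 1 2 : Equiv.Perm (Fin 3)) 1 = 2)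
        ∧ ((Equiv.swap 0 1 * Equiv.swap 1 2 : Equiv.Perm (Fin 3)) 2 = 0) := by decide
    have e6 : ((Equiv.swap 1 2 * Equiv.swap 0 1 : Equiv.Perm (Fin 3)) 0 = 2)
        ∧ ((Equiv.swap 1 2 * Equiv.swap 0 1 : Equiv.Perm (Fin 3)) 1 = 0)
        ∧ ((Equiv.swap 1 2 * Equiv.swap 0 1 : Equiv.Perm (Fin 3)) 2 = 1) := by decide
    rw [e1.1, e1.2.1, e1.2.2, e2.1, e2.2.1, e2.2.2, e3.1, e3.2.1, e3.2.2,
      e4.1, e4.2.1, e4.2.2, e5.1, e5.2.1, e5.2.2, e6.1, e6.2.1, e6.2.2]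
    split_ifs <;> first | omega | ring

end HoffAux

namespace HoffAux

lemma summable_ind {a b c : ℕ} (ha : 2 ≤ a) (hb : 2 ≤ b) (hc : 2 ≤ c)
    (C : (Fin 3 → ℕ) → Prop) [DecidablePred C] :
    Summable fun m => if C m then G a b c m else 0 :=
  Summable.of_nonneg_of_le
    (fun m => by by_cases h : C m <;> simp [h, G_nonneg])
    (fun m => by by_cases h : C m <;> simp [h, G_nonneg])
    (summable_G ha hb hc)

end HoffAux


open HoffAux

theorem hoffman_symmetric_sum_depth_three (l1 l2 l3 : ℕ)
    (h1 : 2 ≤ l1) (h2 : 2 ≤ l2) (h3 : 2 ≤ l3) :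
    ∑ σ : Equiv.Perm (Fin 3), mzv (![l1, l2, l3] ∘ σ) =
      mzv ![l1] * mzv ![l2] * mzv ![l3]
        - (mzv ![l1 + l2] * mzv ![l3] + mzv ![l1 + l3] * mzv ![l2]
            + mzv ![l2 + l3] * mzv ![l1])
        + 2 * mzv ![l1 + l2 + l3] := by
  classical
  have SG := summable_G h1 h2 h3
  have S01 : Summable fun m : Fin 3 → ℕ => if m 0 = m 1 then G l1 l2 l3 m else 0 :=
    summable_ind h1 h2 h3 _
  have S02 : Summable fun m : Fin 3 → ℕ => if m 0 = m 2 then G l1 l2 l3 m else 0 :=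
    summable_ind h1 h2 h3 _
  have S12 : Summable fun m : Fin 3 → ℕ => if m 1 = m 2 then G l1 l2 l3 m else 0 :=
    summable_ind h1 h2 h3 _
  have SAll : Summable fun m : Fin 3 → ℕ =>
      if m 0 = m 1 ∧ m 1 = m 2 then G l1 l2 l3 m else 0 :=
    summable_ind h1 h2 h3 _
  have hstep1 : ∑ σ : Equiv.Perm (Fin 3), mzv (![l1, l2, l3] ∘ σ)
      = ∑' m : Fin 3 → ℕ, ∑ σ : Equiv.Perm (Fin 3),
          (if StrictAnti (m ∘ σ) ∧ (∀ i, 1 ≤ m i) then G l1 l2 l3 m else 0) := by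
    rw [Finset.sum_congr rfl (fun σ _ => mzv_perm l1 l2 l3 σ)]
    exact (Summable.tsum_finsetSum (fun σ _ => summable_ind h1 h2 h3 _)).symm
  rw [hstep1, tsum_congr (key l1 l2 l3 (by omega) (by omega) (by omega))]
  rw [Summable.tsum_add (SG.sub ((S01.add S02).add S12)) (SAll.mul_left 2)]
  rw [Summable.tsum_sub SG ((S01.add S02).add S12), Summable.tsum_add (S01.add S02) S12,
    Summable.tsum_add S01 S02, tsum_mul_left]
  rw [tsum_G h1 h2 h3, tsum_diag01 h1 h2 h3, tsum_diag02 h1 h2 h3,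
    tsum_diag12 h1 h2 h3, tsum_diagAll]
  rw [mzv_single (by omega : 1 ≤ l1), mzv_single (by omega : 1 ≤ l2),
    mzv_single (by omega : 1 ≤ l3), mzv_single (by omega : 1 ≤ l1 + l2),
    mzv_single (by omega : 1 ≤ l1 + l3), mzv_single (by omega : 1 ≤ l2 + l3),
    mzv_single (by omega : 1 ≤ l1 + l2 + l3)]
  ring
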